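/- arXiv:2605.27260 — 4 statements merged into one kernel-verified Lean document; each statement's English description precedes it below -/
import Mathlib

section
/- In the level-set setting: (i) for every vector field u : U → ℝⁿ differentiable at x, div_M(y ↦ N(y) u(y))(x) = ⟨u(x), κ(x)⟩; (ii) the mean curvature vector is normal at x, i.e. P(x) κ(x) = 0. -/
noncomputable section

open scoped RealInnerProductSpace

/-- Euclidean space `ℝⁿ`. -/
abbrev E (n : ℕ) := EuclideanSpace ℝ (Fin n)

/-- The standard orthonormal basis vector `e_k` of `ℝⁿ`. -/
def stdb (n : ℕ) (k : Fin n) : E n := EuclideanSpace.single k 1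

/-- The submanifold divergence of a vector field `v` at `y`, with respect to the
projection field `P(y) = I − N(y)`:
`div_M v(y) := Σ_k ⟨Dv(y)[P(y) e_k], e_k⟩`. -/
def divM (n : ℕ) (Nf : E n → (E n →L[ℝ] E n)) (v : E n → E n) (y : E n) : ℝ :=
  ∑ k, ⟪fderiv ℝ v y (stdb n k - Nf y (stdb n k)), stdb n k⟫

/-- The mean curvature vector, defined componentwise by
`κ_j(y) := div_M(z ↦ N(z) e_j)(y)`. -/
def kappa (n : ℕ) (Nf : E n → (E n →L[ℝ] E n)) (y : E n) : E n :=
  ∑ j, (divM n Nf (fun z => Nf z (stdb n j)) y) • stdb n j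

lemma inner_stdb {n : ℕ} (v : E n) (k : Fin n) : ⟪v, stdb n k⟫ = v k := by
  simp [stdb, EuclideanSpace.inner_single_right]

lemma stdb_expand {n : ℕ} (v : E n) : ∑ k, v k • stdb n k = v := by
  ext i
  simp [stdb, EuclideanSpace.single_apply, Pi.single_apply]

lemma key {n : ℕ} {F : Type*} [AddCommGroup F] [Module ℝ F]
    (N : E n →L[ℝ] E n)
    (hsymN : ∀ a b : E n, ⟪N a, b⟫ = ⟪a, N b⟫)
    (hid : ∀ a : E n, N (N a) = N a)
    (G : E n → E n → F)
    (hGl : ∀ b, IsLinearMap ℝ (fun a => G a b))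
    (hGr : ∀ a, IsLinearMap ℝ (G a)) :
    ∑ k, G (stdb n k - N (stdb n k)) (N (stdb n k)) = 0 := by
  have hcoord : ∀ k b : Fin n, (N (stdb n k)) b = (N (stdb n b)) k := by
    intro k b
    calc (N (stdb n k)) b = ⟪N (stdb n k), stdb n b⟫ := (inner_stdb _ _).symm
      _ = ⟪stdb n k, N (stdb n b)⟫ := hsymN _ _
      _ = ⟪N (stdb n b), stdb n k⟫ := real_inner_comm _ _
      _ = (N (stdb n b)) k := inner_stdb _ _
  have hGsum : ∀ (a : E n) (c : Fin n → ℝ) (w : Fin n → E n),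
      G a (∑ b, c b • w b) = ∑ b, c b • G a (w b) := by
    intro a c w
    have h := map_sum (IsLinearMap.mk' _ (hGr a)) (fun b => c b • w b) Finset.univ
    simp only [IsLinearMap.mk'_apply] at h
    rw [h]
    exact Finset.sum_congr rfl fun b _ => (hGr a).map_smul _ _
  have hGlsum : ∀ (b : E n) (c : Fin n → ℝ) (w : Fin n → E n),
      G (∑ k, c k • w k) b = ∑ k, c k • G (w k) b := by
    intro b c w
    have h := map_sum (IsLinearMap.mk' _ (hGl b)) (fun k => c k • w k) Finset.univ
    simp only [IsLinearMap.mk'_apply] at h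
    rw [h]
    exact Finset.sum_congr rfl fun k _ => (hGl b).map_smul _ _
  have hx : ∀ (a v : E n), G a v = ∑ b, v b • G a (stdb n b) := by
    intro a v
    conv_lhs => rw [← stdb_expand v]
    rw [hGsum]
  calc ∑ k, G (stdb n k - N (stdb n k)) (N (stdb n k))
      = ∑ k, ∑ b, (N (stdb n b)) k • G (stdb n k - N (stdb n k)) (stdb n b) := by
        refine Finset.sum_congr rfl fun k _ => ?_
        rw [hx]
        exact Finset.sum_congr rfl fun b _ => by rw [hcoord]
    _ = ∑ b, G (∑ k, (N (stdb n b)) k • (stdb n k - N (stdb n k))) (stdb n b) := by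
        rw [Finset.sum_comm]
        exact Finset.sum_congr rfl fun b _ => (hGlsum _ _ _).symm
    _ = 0 := by
        refine Finset.sum_eq_zero fun b _ => ?_
        have hv : ∑ k, (N (stdb n b)) k • (stdb n k - N (stdb n k)) = 0 := by
          have h : ∑ k, (N (stdb n b)) k • (stdb n k - N (stdb n k))
              = (∑ k, (N (stdb n b)) k • stdb n k)
                - N (∑ k, (N (stdb n b)) k • stdb n k) := by
            rw [map_sum, ← Finset.sum_sub_distrib]
            exact Finset.sum_congr rfl fun k _ => by rw [smul_sub, map_smul]
          rw [h, stdb_expand, hid, sub_self]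
        rw [hv, (hGl (stdb n b)).map_zero]

/-- In the level-set setting (a C² field `N` of symmetric idempotent matrices on an
open neighborhood `U` of `x`):
(i) for every vector field `u` differentiable at `x`,
`div_M(y ↦ N(y) u(y))(x) = ⟨u(x), κ(x)⟩`;
(ii) the mean curvature vector is normal at `x`: `P(x) κ(x) = 0`. -/
theorem divM_normal_part_and_kappa_normal (n : ℕ)
    (U : Set (E n)) (hU : IsOpen U) (x : E n) (hx : x ∈ U)
    (Nf : E n → (E n →L[ℝ] E n))
    (hC2 : ContDiffOn ℝ 2 Nf U)
    (hsym : ∀ y ∈ U, ∀ a b : E n, ⟪Nf y a, b⟫ = ⟪a, Nf y b⟫)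
    (hidem : ∀ y ∈ U, ∀ a : E n, Nf y (Nf y a) = Nf y a) :
    (∀ u : E n → E n, DifferentiableAt ℝ u x →
        divM n Nf (fun y => Nf y (u y)) x = ⟪u x, kappa n Nf x⟫) ∧
    kappa n Nf x - Nf x (kappa n Nf x) = 0 := by
  have hmem : U ∈ nhds x := hU.mem_nhds hx
  have hNd : DifferentiableAt ℝ Nf x :=
    (hC2.contDiffAt hmem).differentiableAt (by norm_num)
  set M := fderiv ℝ Nf x with hMdef
  have hM : HasFDerivAt Nf M x := hNd.hasFDerivAt
  have hDc : ∀ c : E n, HasFDerivAt (fun z => Nf z c) (M.flip c) x := by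
    intro c
    have h := hM.clm_apply (hasFDerivAt_const c x)
    simpa using h
  have hfd : ∀ c : E n, fderiv ℝ (fun z => Nf z c) x = M.flip c :=
    fun c => (hDc c).fderiv
  have h1 : ∀ w a b : E n, ⟪M w a, b⟫ = ⟪a, M w b⟫ := by
    intro w a b
    have hfa := (hDc a).inner ℝ (hasFDerivAt_const b x)
    have hfb := (hasFDerivAt_const a x).inner ℝ (hDc b)
    have heq : (fun y => (⟪Nf y a, b⟫ : ℝ)) =ᶠ[nhds x] (fun y => (⟪a, Nf y b⟫ : ℝ)) :=
      Filter.eventuallyEq_of_mem hmem (fun y hy => hsym y hy a b)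
    have hfe := heq.fderiv_eq (𝕜 := ℝ)
    rw [hfa.fderiv, hfb.fderiv] at hfe
    have happ := ContinuousLinearMap.ext_iff.mp hfe w
    simpa [fderivInnerCLM_apply] using happ
  have h2 : ∀ w a : E n, Nf x (M w a) + M w (Nf x a) = M w a := by
    intro w a
    have hL : HasFDerivAt (fun y => Nf y (Nf y a))
        ((Nf x).comp (M.flip a) + M.flip (Nf x a)) x := hM.clm_apply (hDc a)
    have heq : (fun y => Nf y (Nf y a)) =ᶠ[nhds x] (fun y => Nf y a) :=
      Filter.eventuallyEq_of_mem hmem (fun y hy => hidem y hy a)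
    have hfe := heq.fderiv_eq (𝕜 := ℝ)
    rw [hL.fderiv, (hDc a).fderiv] at hfe
    have happ := ContinuousLinearMap.ext_iff.mp hfe w
    simpa using happ
  -- κ components
  have hκval : ∀ j, divM n Nf (fun z => Nf z (stdb n j)) x
      = ∑ k, ⟪M (stdb n k - Nf x (stdb n k)) (stdb n j), stdb n k⟫ := by
    intro j
    unfold divM
    simp only [hfd, ContinuousLinearMap.flip_apply]
  -- part (i)
  constructor
  · intro u hu
    have hu' : HasFDerivAt u (fderiv ℝ u x) x := hu.hasFDerivAt
    have hD : HasFDerivAt (fun y => Nf y (u y))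
        ((Nf x).comp (fderiv ℝ u x) + M.flip (u x)) x := hM.clm_apply hu'
    have hstep : divM n Nf (fun y => Nf y (u y)) x
        = (∑ k, ⟪Nf x ((fderiv ℝ u x) (stdb n k - Nf x (stdb n k))), stdb n k⟫)
          + ∑ k, ⟪M (stdb n k - Nf x (stdb n k)) (u x), stdb n k⟫ := by
      unfold divM
      rw [← Finset.sum_add_distrib]
      refine Finset.sum_congr rfl fun k _ => ?_
      rw [hD.fderiv]
      simp [inner_add_left]
    rw [hstep]
    have hzero : (∑ k, ⟪Nf x ((fderiv ℝ u x) (stdb n k - Nf x (stdb n k))), stdb n k⟫) = 0 := by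
      have hk := key (Nf x) (hsym x hx) (hidem x hx)
        (fun a b => (⟪(fderiv ℝ u x) a, b⟫ : ℝ))
        (fun b => ⟨fun p q => by simp only [map_add, inner_add_left],
                   fun c p => by simp only [map_smul, real_inner_smul_left, smul_eq_mul]⟩)
        (fun a => ⟨fun p q => by simp only [inner_add_right],
                   fun c p => by simp only [real_inner_smul_right, smul_eq_mul]⟩)
      rw [← hk]
      exact Finset.sum_congr rfl fun k _ => hsym x hx _ _
    rw [hzero, zero_add]
    -- second sum equals ⟪u x, κ⟫
    have hterm : ∀ k, (⟪M (stdb n k - Nf x (stdb n k)) (u x), stdb n k⟫ : ℝ)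
        = ∑ j, (u x) j * ⟪M (stdb n k - Nf x (stdb n k)) (stdb n j), stdb n k⟫ := by
      intro k
      conv_lhs => rw [← stdb_expand (u x)]
      rw [map_sum, sum_inner]
      exact Finset.sum_congr rfl fun j _ => by rw [map_smul, real_inner_smul_left]
    have hrhs : (⟪u x, kappa n Nf x⟫ : ℝ)
        = ∑ j, (u x) j * ∑ k, ⟪M (stdb n k - Nf x (stdb n k)) (stdb n j), stdb n k⟫ := by
      unfold kappa
      rw [inner_sum]
      refine Finset.sum_congr rfl fun j _ => ?_
      rw [real_inner_smul_right, inner_stdb, hκval j, mul_comm]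
    rw [hrhs]
    calc ∑ k, (⟪M (stdb n k - Nf x (stdb n k)) (u x), stdb n k⟫ : ℝ)
        = ∑ k, ∑ j, (u x) j * ⟪M (stdb n k - Nf x (stdb n k)) (stdb n j), stdb n k⟫ :=
          Finset.sum_congr rfl fun k _ => hterm k
      _ = ∑ j, (u x) j * ∑ k, ⟪M (stdb n k - Nf x (stdb n k)) (stdb n j), stdb n k⟫ := by
          rw [Finset.sum_comm]
          exact Finset.sum_congr rfl fun j _ => by rw [Finset.mul_sum]
  -- part (ii)
  · have hκ : kappa n Nf x = ∑ k, M (stdb n k - Nf x (stdb n k)) (stdb n k) := by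
      unfold kappa
      have hcoordK : ∀ j, divM n Nf (fun z => Nf z (stdb n j)) x
          = (∑ k, M (stdb n k - Nf x (stdb n k)) (stdb n k)) j := by
        intro j
        rw [hκval j, ← inner_stdb (∑ k, M (stdb n k - Nf x (stdb n k)) (stdb n k)) j,
          sum_inner]
        refine Finset.sum_congr rfl fun k _ => ?_
        rw [h1, real_inner_comm]
      calc ∑ j, (divM n Nf (fun z => Nf z (stdb n j)) x) • stdb n j
          = ∑ j, ((∑ k, M (stdb n k - Nf x (stdb n k)) (stdb n k)) j) • stdb n j :=
            Finset.sum_congr rfl fun j _ => by rw [hcoordK j]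
        _ = ∑ k, M (stdb n k - Nf x (stdb n k)) (stdb n k) := stdb_expand _
    rw [hκ, map_sum, ← Finset.sum_sub_distrib]
    have hsub : ∀ k, M (stdb n k - Nf x (stdb n k)) (stdb n k)
        - Nf x (M (stdb n k - Nf x (stdb n k)) (stdb n k))
        = M (stdb n k - Nf x (stdb n k)) (Nf x (stdb n k)) := by
      intro k
      exact (eq_sub_of_add_eq' (h2 (stdb n k - Nf x (stdb n k)) (stdb n k))).symm
    rw [Finset.sum_congr rfl fun k _ => hsub k]
    exact key (Nf x) (hsym x hx) (hidem x hx) (fun a b => M a b)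
      (fun b => ⟨fun p q => by simp only [map_add, ContinuousLinearMap.add_apply],
                 fun c p => by simp only [map_smul, ContinuousLinearMap.smul_apply]⟩)
      (fun a => (M a).toLinearMap.isLinear)
end
end

section
/- Let 0 ≤ s < q, let S be a map from ℝⁿ to rank-s tensors and T a map from ℝⁿ to rank-q tensors, both Fréchet differentiable at x ∈ ℝⁿ, and let P : ℝⁿ → ℝⁿ be a linear map. Then for all v_1,…,v_{q−s−1} ∈ ℝⁿ: Div_M(y ↦ S(y):T(y))(x)(v_1,…,v_{q−s−1}) = (S(x) : Div_M T(x))(v_1,…,v_{q−s−1}) + Σ_{ι:{1,…,s}→{1,…,n}} Σ_{k=1}^n T(x)(e_{ι(1)},…,e_{ι(s)}, v_1,…,v_{q−s−1}, e_k)·(DS(x)[P e_k])(e_{ι(1)},…,e_{ι(s)}). (In the paper's notation, Div_M(S:T) = S:Div_M T + T:∇_M S.) -/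
noncomputable section

/-- The (finite-dimensional, hence normed) space of rank-`q` tensors on `ℝⁿ`. -/
abbrev CMM (n q : ℕ) := ContinuousMultilinearMap ℝ (fun _ : Fin q => E n) ℝ

/-- Left-contraction `S : T` of a rank-`s` tensor with a rank-`(s+r)` tensor:
`(S:T)(v) := Σ_ι S(e_{ι(1)},…,e_{ι(s)}) · T(e_{ι(1)},…,e_{ι(s)}, v)`
(for `s = 0` this is the scalar multiple `S·T`). -/
def contrL (n s r : ℕ) (S : (Fin s → E n) → ℝ) (T : (Fin (s + r) → E n) → ℝ) :
    (Fin r → E n) → ℝ :=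
  fun vs => ∑ ι : Fin s → Fin n,
    S (fun k => stdb n (ι k)) * T (Fin.append (fun k => stdb n (ι k)) vs)

/-- Product rule for the submanifold divergence of a left-contraction
(`0 ≤ s < q` with `q := s + (r+1)`):
`Div_M(S:T) = S : Div_M T + T : ∇_M S`, written out slotwise. -/
theorem divM_contraction_product_rule (n s r : ℕ)
    (S : E n → CMM n s) (T : E n → CMM n (s + (r + 1))) (x : E n)
    (hS : DifferentiableAt ℝ S x) (hT : DifferentiableAt ℝ T x)
    (P : E n →ₗ[ℝ] E n) :
    ∀ vs : Fin r → E n,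
      (∑ k, fderiv ℝ
          (fun y => contrL n s (r + 1) (fun z => S y z) (fun z => T y z)
            (Fin.snoc vs (stdb n k))) x (P (stdb n k)))
        = contrL n s r (fun z => S x z)
            (fun ws => ∑ k, fderiv ℝ T x (P (stdb n k)) (Fin.snoc ws (stdb n k))) vs
          + ∑ ι : Fin s → Fin n, ∑ k,
              T x (Fin.append (fun i => stdb n (ι i)) (Fin.snoc vs (stdb n k)))
                * fderiv ℝ S x (P (stdb n k)) (fun i => stdb n (ι i)) := by
  intro vs
  have hSm : ∀ m : Fin s → E n, HasFDerivAt (fun y => S y m)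
      ((ContinuousMultilinearMap.apply ℝ (fun _ : Fin s => E n) ℝ m).comp (fderiv ℝ S x)) x :=
    fun m => (ContinuousMultilinearMap.apply ℝ _ ℝ m).hasFDerivAt.comp x hS.hasFDerivAt
  have hTm : ∀ m : Fin (s + (r+1)) → E n, HasFDerivAt (fun y => T y m)
      ((ContinuousMultilinearMap.apply ℝ (fun _ : Fin (s+(r+1)) => E n) ℝ m).comp (fderiv ℝ T x)) x :=
    fun m => (ContinuousMultilinearMap.apply ℝ _ ℝ m).hasFDerivAt.comp x hT.hasFDerivAt
  have key : ∀ k : Fin n,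
      HasFDerivAt (fun y => contrL n s (r + 1) (fun z => S y z) (fun z => T y z)
          (Fin.snoc vs (stdb n k)))
        (∑ ι : Fin s → Fin n,
          (S x (fun i => stdb n (ι i)) •
             ((ContinuousMultilinearMap.apply ℝ (fun _ : Fin (s+(r+1)) => E n) ℝ
                (Fin.append (fun i => stdb n (ι i)) (Fin.snoc vs (stdb n k)))).comp (fderiv ℝ T x))
           + T x (Fin.append (fun i => stdb n (ι i)) (Fin.snoc vs (stdb n k))) •
             ((ContinuousMultilinearMap.apply ℝ (fun _ : Fin s => E n) ℝ
                (fun i => stdb n (ι i))).comp (fderiv ℝ S x)))) x := by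
    intro k
    unfold contrL
    exact HasFDerivAt.fun_sum fun ι _ => (hSm _).mul (hTm _)
  have LHS : (∑ k, fderiv ℝ
          (fun y => contrL n s (r + 1) (fun z => S y z) (fun z => T y z)
            (Fin.snoc vs (stdb n k))) x (P (stdb n k)))
      = ∑ k, ∑ ι : Fin s → Fin n,
          (S x (fun i => stdb n (ι i)) *
             fderiv ℝ T x (P (stdb n k)) (Fin.append (fun i => stdb n (ι i)) (Fin.snoc vs (stdb n k)))
           + T x (Fin.append (fun i => stdb n (ι i)) (Fin.snoc vs (stdb n k))) *
             fderiv ℝ S x (P (stdb n k)) (fun i => stdb n (ι i))) := by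
    refine Finset.sum_congr rfl fun k _ => ?_
    rw [(key k).fderiv]
    simp [ContinuousLinearMap.sum_apply, ContinuousMultilinearMap.apply_apply]
  rw [LHS, Finset.sum_comm, contrL]
  simp only [Finset.sum_add_distrib, Finset.mul_sum, ← Fin.append_snoc]
end
end

section
/- Let q ≥ 0, let T : ℝ × ℝⁿ → (rank-q tensors) be C² on a neighborhood of (t,x), let w : ℝⁿ → ℝⁿ be Fréchet differentiable at x, and let P : ℝ × ℝⁿ → L(ℝⁿ,ℝⁿ) be C¹ near (t,x). Then for every b ∈ ℝⁿ: D_y(y ↦ 𝒟_w T(t,y))(x)[P(t,x) b] − 𝒟_w((s,y) ↦ D_y T(s,y)[P(s,y) b])(t,x) = D_y T(t,x)[ Dw(x)[P(t,x) b] − (𝒟_w P)(t,x)[b] ]. (This is the commutator identity ∇_M(𝒟_w T) − 𝒟_w(∇_M T) = ∇T ○ (2C[w] + ∇_M wᵀ), where 2C[w] := −𝒟_w P and ∇_M wᵀ is the rank-2 tensor (a,b) ↦ ⟨a, Dw(x)[P(t,x) b]⟩.) -/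
noncomputable section

/-- Commutator of the material derivative `𝒟_w F(t,x) = ∂_t F + D_y F[w(x)]`
(encoded as the full Fréchet derivative of a field on `ℝ × ℝⁿ` in the direction
`(1, w)`) with the submanifold gradient built from a time-dependent projection
field `P`: for a C² rank-`q` tensor field `T`, a C¹ field `P` and every `b ∈ ℝⁿ`,
`D_y(𝒟_w T)(x)[P(t,x) b] − 𝒟_w(D_y T[P b])(t,x)
  = D_y T(t,x)[Dw(x)[P(t,x) b] − (𝒟_w P)(t,x)[b]]`,
i.e. `∇_M(𝒟_w T) − 𝒟_w(∇_M T) = ∇T ○ (2C[w] + ∇_M wᵀ)` with `2C[w] := −𝒟_w P`. -/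
theorem material_derivative_submanifold_gradient_commutator (n q : ℕ)
    (T : ℝ × E n → CMM n q) (t : ℝ) (x : E n)
    (hT : ContDiffAt ℝ 2 T (t, x))
    (w : E n → E n) (hw : DifferentiableAt ℝ w x)
    (Pf : ℝ × E n → (E n →L[ℝ] E n)) (hP : ContDiffAt ℝ 1 Pf (t, x)) :
    ∀ b : E n,
      fderiv ℝ (fun y => fderiv ℝ T (t, y) (1, w y)) x (Pf (t, x) b)
        - fderiv ℝ (fun p : ℝ × E n => fderiv ℝ T p (0, Pf p b)) (t, x) (1, w x)
        = fderiv ℝ T (t, x)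
            (0, fderiv ℝ w x (Pf (t, x) b) - fderiv ℝ Pf (t, x) (1, w x) b) := by
  intro b
  have hT' : ContDiffAt ℝ 1 (fderiv ℝ T) (t, x) := hT.fderiv_right (by norm_num)
  have hsymm : IsSymmSndFDerivAt ℝ T (t, x) := hT.isSymmSndFDerivAt (by norm_num)
  have hTd : DifferentiableAt ℝ (fderiv ℝ T) (t, x) := hT'.differentiableAt one_ne_zero
  have hPd : DifferentiableAt ℝ Pf (t, x) := hP.differentiableAt one_ne_zero
  have hinc : DifferentiableAt ℝ (fun y : E n => ((t : ℝ), y)) x :=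
    DifferentiableAt.prodMk (differentiableAt_const _) differentiableAt_id
  have hfi : fderiv ℝ (fun y : E n => ((t : ℝ), y)) x
      = ContinuousLinearMap.inr ℝ ℝ (E n) := by
    have h : HasFDerivAt (fun y : E n => ((t : ℝ), y))
        ((0 : E n →L[ℝ] ℝ).prod (ContinuousLinearMap.id ℝ (E n))) x :=
      HasFDerivAt.prodMk (hasFDerivAt_const t x) (hasFDerivAt_id x)
    rw [h.fderiv]; ext v <;> simp
  have hc : DifferentiableAt ℝ (fun y => fderiv ℝ T (t, y)) x := by have := DifferentiableAt.comp (g := fderiv ℝ T) x hTd hinc; exact this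
  have hcder : ∀ v, fderiv ℝ (fun y => fderiv ℝ T (t, y)) x v
      = fderiv ℝ (fderiv ℝ T) (t, x) (0, v) := by
    intro v
    have h := fderiv_comp (g := fderiv ℝ T) x hTd hinc
    rw [show (fun y => fderiv ℝ T (t, y)) = (fderiv ℝ T) ∘ (fun y : E n => ((t : ℝ), y))
        from rfl, h]
    simp [hfi]
  have hu : DifferentiableAt ℝ (fun y : E n => ((1 : ℝ), w y)) x :=
    DifferentiableAt.prodMk (differentiableAt_const _) hw
  have hfu : fderiv ℝ (fun y : E n => ((1 : ℝ), w y)) x (Pf (t, x) b)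
      = (0, fderiv ℝ w x (Pf (t, x) b)) := by
    rw [DifferentiableAt.fderiv_prodMk (differentiableAt_const _) hw]
    simp
  -- Term A
  have hA : fderiv ℝ (fun y => fderiv ℝ T (t, y) (1, w y)) x (Pf (t, x) b)
      = fderiv ℝ (fderiv ℝ T) (t, x) (0, Pf (t, x) b) (1, w x)
        + fderiv ℝ T (t, x) (0, fderiv ℝ w x (Pf (t, x) b)) := by
    rw [fderiv_clm_apply hc hu]
    simp only [ContinuousLinearMap.add_apply, ContinuousLinearMap.flip_apply,
      ContinuousLinearMap.comp_apply, hcder, hfu]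
    abel
  -- Term B
  have hu' : DifferentiableAt ℝ (fun p : ℝ × E n => ((0 : ℝ), Pf p b)) (t, x) :=
    DifferentiableAt.prodMk (differentiableAt_const _) (hPd.clm_apply (differentiableAt_const b))
  have hfu' : fderiv ℝ (fun p : ℝ × E n => ((0 : ℝ), Pf p b)) (t, x) (1, w x)
      = (0, fderiv ℝ Pf (t, x) (1, w x) b) := by
    rw [DifferentiableAt.fderiv_prodMk (differentiableAt_const _)
      (hPd.clm_apply (differentiableAt_const b))]
    rw [fderiv_clm_apply hPd (differentiableAt_const b)]
    simp
  have hB : fderiv ℝ (fun p : ℝ × E n => fderiv ℝ T p (0, Pf p b)) (t, x) (1, w x)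
      = fderiv ℝ (fderiv ℝ T) (t, x) (1, w x) (0, Pf (t, x) b)
        + fderiv ℝ T (t, x) (0, fderiv ℝ Pf (t, x) (1, w x) b) := by
    rw [fderiv_clm_apply hTd hu']
    simp only [ContinuousLinearMap.add_apply, ContinuousLinearMap.flip_apply,
      ContinuousLinearMap.comp_apply, hfu']
    abel
  rw [hA, hB, hsymm.eq (0, Pf (t, x) b) (1, w x)]
  have : ((0 : ℝ), fderiv ℝ w x (Pf (t, x) b) - fderiv ℝ Pf (t, x) (1, w x) b)
      = ((0 : ℝ), fderiv ℝ w x (Pf (t, x) b)) - ((0 : ℝ), fderiv ℝ Pf (t, x) (1, w x) b) := by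
    simp [Prod.ext_iff]
  rw [this, map_sub]
  abel
end
end

section
/- Fix 1 ≤ i, j ≤ n, a point x ∈ ℝⁿ and a linear map P : ℝⁿ → ℝⁿ. Let A be a map from ℝⁿ to rank-2 tensors, Fréchet differentiable at x. Define the rank-1 tensor field F by F(y)(v) := y_i·A(y)(e_j, v) − y_j·A(y)(e_i, v), where y_i, y_j are the i-th and j-th Cartesian coordinates of y. Then Div_M F(x) = x_i·(Div_M A(x))(e_j) − x_j·(Div_M A(x))(e_i) + Σ_{k=1}^n [⟨P e_k, e_i⟩·A(x)(e_j, e_k) − ⟨P e_k, e_j⟩·A(x)(e_i, e_k)]. (In the paper's notation, Div_M(l_{ij} : A) = l_{ij} : Div_M A − A ⊙ ω_{ij} when P is self-adjoint, where l_{ij}(y) := y_i e_jᵀ − y_j e_iᵀ and ω_{ij} := eⁱ ⊗ Pʲ − eʲ ⊗ Pⁱ.) -/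
noncomputable section

open scoped RealInnerProductSpace

/-- Product/difference rule for a single summand of the divergence. -/
lemma key_s16 (n : ℕ) (i j : Fin n) (x v : E n)
    (A : E n → CMM n 2) (hA : DifferentiableAt ℝ A x) (m1 m2 : Fin 2 → E n) :
    fderiv ℝ (fun y => y i * A y m1 - y j * A y m2) x v
      = (v i * A x m1 + x i * fderiv ℝ A x v m1)
        - (v j * A x m2 + x j * fderiv ℝ A x v m2) := by
  have hi : HasFDerivAt (fun y : E n => y i)
      (PiLp.proj (𝕜 := ℝ) 2 (fun _ : Fin n => ℝ) i) x :=
    by exact (PiLp.proj (𝕜 := ℝ) 2 (fun _ : Fin n => ℝ) i).hasFDerivAt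
  have hj : HasFDerivAt (fun y : E n => y j)
      (PiLp.proj (𝕜 := ℝ) 2 (fun _ : Fin n => ℝ) j) x :=
    by exact (PiLp.proj (𝕜 := ℝ) 2 (fun _ : Fin n => ℝ) j).hasFDerivAt
  have h1 := hA.hasFDerivAt.continuousMultilinear_apply_const m1
  have h2 := hA.hasFDerivAt.continuousMultilinear_apply_const m2
  have : fderiv ℝ (fun y : E n => y i * A y m1 - y j * A y m2) x = _ :=
    ((hi.mul h1).sub (hj.mul h2)).fderiv
  rw [this]
  simp [ContinuousLinearMap.flipMultilinear]
  ring

/-- Submanifold divergence of the angular-momentum contraction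
`F(y)(v) := y_i·A(y)(e_j, v) − y_j·A(y)(e_i, v)` of a rank-2 tensor field `A`
(with `Div_M` taken w.r.t. the linear map `P`):
`Div_M(l_{ij} : A) = l_{ij} : Div_M A − A ⊙ ω_{ij}`, written out explicitly. -/
theorem divM_angular_momentum_contraction (n : ℕ) (i j : Fin n) (x : E n)
    (P : E n →ₗ[ℝ] E n)
    (A : E n → CMM n 2) (hA : DifferentiableAt ℝ A x) :
    ∑ k, fderiv ℝ
        (fun y => y i * A y ![stdb n j, stdb n k] - y j * A y ![stdb n i, stdb n k])
        x (P (stdb n k))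
      = x i * (∑ k, fderiv ℝ A x (P (stdb n k)) ![stdb n j, stdb n k])
        - x j * (∑ k, fderiv ℝ A x (P (stdb n k)) ![stdb n i, stdb n k])
        + ∑ k, (⟪P (stdb n k), stdb n i⟫ * A x ![stdb n j, stdb n k]
            - ⟪P (stdb n k), stdb n j⟫ * A x ![stdb n i, stdb n k]) := by
  have h : ∀ k : Fin n, ⟪P (stdb n k), stdb n i⟫ = (P (stdb n k)) i ∧
      ⟪P (stdb n k), stdb n j⟫ = (P (stdb n k)) j := by
    intro k
    constructor <;> simp [stdb, EuclideanSpace.inner_single_right]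
  simp only [key_s16 n i j x _ A hA]
  rw [Finset.mul_sum, Finset.mul_sum, ← Finset.sum_sub_distrib, ← Finset.sum_add_distrib]
  apply Finset.sum_congr rfl
  intro k _
  rw [(h k).1, (h k).2]
  ring
end
end
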